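/- Identify the plane ℝ² with ℂ. Let v > 0 be real, ω₀ > 0, k_P > 0. Let θ, p, θ_r, p_r : ℝ → ℝ × ℂ × ℝ × ℂ be differentiable with θ_r' = ω₀, p_r' = e^{iθ_r}, θ' = ω₀ + ω_P, p' = e^{iθ} v, where ω_P(t) = k_P · Re( e^{−iθ(t)} ( ω₀ (p(t) − p_r(t)) − i e^{iθ_r(t)} ) ). Define c(t) = p(t) + (i/ω₀) e^{iθ(t)} v, c_r = p_r + (i/ω₀) e^{iθ_r}, and V(t) = (1/2)|c(t) − c_r(t)|². Then V'(t) = −k_P · v · ( Re( e^{−iθ(t)} (c(t) − c_r(t)) ) )² ≤ 0 for all t. -/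

import Mathlib

open Complex

/-- Lyapunov decrease for the proportionally steered vehicle with
a real (aligned, possibly wrongly scaled) translation velocity `v`. -/
theorem steering_lyapunov_decrease
    (v ω₀ kP : ℝ) (hv : 0 < v) (hω₀ : 0 < ω₀) (hkP : 0 < kP)
    (θ θr : ℝ → ℝ) (p pr : ℝ → ℂ)
    (ωP : ℝ → ℝ)
    (hωP : ∀ t, ωP t = kP * (Complex.exp (-θ t * Complex.I) *
        (ω₀ * (p t - pr t) - Complex.I * Complex.exp (θr t * Complex.I))).re)
    (hθr : ∀ t, HasDerivAt θr ω₀ t)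
    (hpr : ∀ t, HasDerivAt pr (Complex.exp (θr t * Complex.I)) t)
    (hθ : ∀ t, HasDerivAt θ (ω₀ + ωP t) t)
    (hp : ∀ t, HasDerivAt p (Complex.exp (θ t * Complex.I) * v) t)
    (c cr : ℝ → ℂ)
    (hc : ∀ t, c t = p t + (Complex.I / ω₀) * Complex.exp (θ t * Complex.I) * v)
    (hcr : ∀ t, cr t = pr t + (Complex.I / ω₀) * Complex.exp (θr t * Complex.I))
    (V : ℝ → ℝ)
    (hV : ∀ t, V t = (1 / 2) * ‖c t - cr t‖ ^ 2) :
    ∀ t, HasDerivAt V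
        (-kP * v * ((Complex.exp (-θ t * Complex.I) * (c t - cr t)).re) ^ 2) t ∧
      -kP * v * ((Complex.exp (-θ t * Complex.I) * (c t - cr t)).re) ^ 2 ≤ 0 := by
  intro t
  have hω : (ω₀ : ℂ) ≠ 0 := Complex.ofReal_ne_zero.mpr hω₀.ne'
  set R : ℝ := (Complex.exp (-θ t * Complex.I) * (c t - cr t)).re with hRdef
  constructor
  · -- derivative helpers
    have hθC : HasDerivAt (fun s => (θ s : ℂ)) (↑(ω₀ + ωP t)) t := (hθ t).ofReal_comp
    have hθrC : HasDerivAt (fun s => (θr s : ℂ)) (↑ω₀) t := (hθr t).ofReal_comp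
    have hexpθ : HasDerivAt (fun s => Complex.exp (θ s * Complex.I))
        (Complex.exp (θ t * Complex.I) * (↑(ω₀ + ωP t) * Complex.I)) t :=
      (hθC.mul_const Complex.I).cexp
    have hexpθr : HasDerivAt (fun s => Complex.exp (θr s * Complex.I))
        (Complex.exp (θr t * Complex.I) * (↑ω₀ * Complex.I)) t :=
      (hθrC.mul_const Complex.I).cexp
    have hcd : HasDerivAt c (Complex.exp (θ t * Complex.I) * v +
        (Complex.I / ω₀) * (Complex.exp (θ t * Complex.I) * (↑(ω₀ + ωP t) * Complex.I)) * v) t := by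
      have h := (hp t).add ((hexpθ.const_mul (Complex.I / (ω₀:ℂ))).mul_const (v:ℂ))
      exact h.congr_of_eventuallyEq (Filter.Eventually.of_forall fun s => hc s)
    have hcrd : HasDerivAt cr (Complex.exp (θr t * Complex.I) +
        (Complex.I / ω₀) * (Complex.exp (θr t * Complex.I) * (↑ω₀ * Complex.I))) t := by
      have h := (hpr t).add (hexpθr.const_mul (Complex.I / (ω₀:ℂ)))
      exact h.congr_of_eventuallyEq (Filter.Eventually.of_forall fun s => hcr s)
    have hdiff : HasDerivAt (fun s => c s - cr s)
        (Complex.exp (θ t * Complex.I) * ↑(-ωP t * v / ω₀)) t := by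
      refine (hcd.sub hcrd).congr_deriv (Eq.symm ?_)
      push_cast
      field_simp
      ring_nf
      simp only [Complex.I_sq]
      ring
    have hre : HasDerivAt (fun s => (c s - cr s).re)
        (Complex.exp (θ t * Complex.I) * ↑(-ωP t * v / ω₀)).re t :=
      Complex.reCLM.hasFDerivAt.comp_hasDerivAt t hdiff
    have him : HasDerivAt (fun s => (c s - cr s).im)
        (Complex.exp (θ t * Complex.I) * ↑(-ωP t * v / ω₀)).im t :=
      Complex.imCLM.hasFDerivAt.comp_hasDerivAt t hdiff
    have hVd := ((hre.pow 2).add (him.pow 2)).const_mul (1/2 : ℝ)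
    have hVeq : V = fun s => (1/2 : ℝ) * ((c s - cr s).re ^ 2 + (c s - cr s).im ^ 2) := by
      funext s
      rw [hV s, Complex.sq_norm, Complex.normSq_apply]
      ring
    rw [hVeq]
    refine hVd.congr_deriv (Eq.symm ?_)
    -- key relation: ωP t = kP * (ω₀ * R)
    have hone : Complex.exp (-θ t * Complex.I) * Complex.exp (θ t * Complex.I) = 1 := by
      rw [← Complex.exp_add]; ring_nf; exact Complex.exp_zero
    have hkey : ωP t = kP * (ω₀ * R) := by
      rw [hωP t, hRdef]
      congr 1
      have hz : Complex.exp (-θ t * Complex.I) *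
          (ω₀ * (p t - pr t) - Complex.I * Complex.exp (θr t * Complex.I))
          = ω₀ * (Complex.exp (-θ t * Complex.I) * (c t - cr t)) - Complex.I * v := by
        have hone' : Complex.exp (-(↑(θ t) * Complex.I)) * Complex.exp (↑(θ t) * Complex.I) = 1 := by
          rw [← Complex.exp_add]; ring_nf; exact Complex.exp_zero
        rw [hc t, hcr t]
        field_simp
        ring_nf
        linear_combination (-(Complex.I * (v:ℂ))) * hone'
      rw [hz]
      simp [Complex.sub_re, Complex.mul_re]
    -- now pure algebra on re/im
    have hE : Complex.exp (-↑(θ t) * Complex.I)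
        = (Real.cos (θ t) : ℂ) - (Real.sin (θ t) : ℂ) * Complex.I := by
      rw [show (-↑(θ t) * Complex.I : ℂ) = ↑(-θ t) * Complex.I by push_cast; ring,
        Complex.exp_mul_I]
      rw [show ((-θ t : ℝ) : ℂ) = -(θ t : ℂ) by push_cast; ring, Complex.cos_neg,
        Complex.sin_neg, Complex.ofReal_cos, Complex.ofReal_sin]
      ring
    have hRk : R = Real.cos (θ t) * (c t - cr t).re + Real.sin (θ t) * (c t - cr t).im := by
      rw [hRdef, hE]
      simp [sub_mul, Complex.mul_re, Complex.sub_re, Complex.sub_im,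
        Complex.mul_im, Complex.cos_ofReal_re, Complex.sin_ofReal_re]
      try ring_nf
    rw [hkey] at *
    simp only [Complex.exp_mul_I, add_mul, Complex.add_re, Complex.add_im,
      Complex.mul_re, Complex.mul_im, Complex.ofReal_re, Complex.ofReal_im,
      Complex.I_re, Complex.I_im, Complex.cos_ofReal_re, Complex.cos_ofReal_im,
      Complex.sin_ofReal_re, Complex.sin_ofReal_im]
    rw [hRk]
    field_simp
    ring
  · have : (0:ℝ) ≤ kP * v * ((Complex.exp (-θ t * Complex.I) * (c t - cr t)).re) ^ 2 := by
      positivity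
    linarith
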